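/- Suppose L₀ is a sequential contraction of L. Then the dimensions of the terms of the lower central series do not increase: for every l : ℕ, finrank ℝ (lowerCentralSeries ℝ L₀ L₀ l : Submodule ℝ L₀) ≤ finrank ℝ (lowerCentralSeries ℝ L L l : Submodule ℝ L). -/

import Mathlib

open Filter Module

/-- `L₀` is a sequential contraction of the real Lie algebra `L`: there is a sequence of
real-linear equivalences `T p : L ≃ₗ[ℝ] L₀` such that the transported brackets converge to the
bracket of `L₀`. -/
def IsSequentialContraction (L L₀ : Type*) [LieRing L] [LieAlgebra ℝ L]
    [LieRing L₀] [LieAlgebra ℝ L₀] [TopologicalSpace L₀] : Prop :=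
  ∃ T : ℕ → (L ≃ₗ[ℝ] L₀), ∀ x y : L₀,
    Tendsto (fun p => T p ⁅(T p).symm x, (T p).symm y⁆) atTop (nhds ⁅x, y⁆)

section Aux
open LieModule

variable {L L₀ : Type*} [LieRing L] [LieAlgebra ℝ L] [LieRing L₀] [LieAlgebra ℝ L₀]
    [Module.Finite ℝ L] [Module.Finite ℝ L₀]
    [TopologicalSpace L₀] [IsTopologicalAddGroup L₀] [ContinuousSMul ℝ L₀] [T2Space L₀]

/-- Convergence of transported brackets with a moving second argument. -/
lemma contraction_bracket_tendsto (T : ℕ → (L ≃ₗ[ℝ] L₀))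
    (hT : ∀ x y : L₀, Tendsto (fun p => T p ⁅(T p).symm x, (T p).symm y⁆) atTop (nhds ⁅x, y⁆))
    (x : L₀) {u : ℕ → L} {n : L₀} (hu : Tendsto (fun p => T p (u p)) atTop (nhds n)) :
    Tendsto (fun p => T p ⁅(T p).symm x, u p⁆) atTop (nhds ⁅x, n⁆) := by
  classical
  let b := Module.finBasis ℝ L₀
  have key : ∀ p, T p ⁅(T p).symm x, u p⁆ =
      ∑ i, b.repr (T p (u p)) i • T p ⁅(T p).symm x, (T p).symm (b i)⁆ := by
    intro p
    let g : L →ₗ[ℝ] L₀ := (T p).toLinearMap ∘ₗ (LieAlgebra.ad ℝ L ((T p).symm x))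
    have hup : u p = ∑ i, b.repr (T p (u p)) i • (T p).symm (b i) := by
      apply (T p).injective
      simp only [map_sum, map_smul, LinearEquiv.apply_symm_apply]
      exact (b.sum_repr (T p (u p))).symm
    calc T p ⁅(T p).symm x, u p⁆ = g (u p) := rfl
      _ = ∑ i, b.repr (T p (u p)) i • g ((T p).symm (b i)) := by
          conv_lhs => rw [hup]
          rw [map_sum]; simp only [map_smul]
      _ = ∑ i, b.repr (T p (u p)) i • T p ⁅(T p).symm x, (T p).symm (b i)⁆ := rfl
  have hlim : ⁅x, n⁆ = ∑ i, b.repr n i • ⁅x, (b i : L₀)⁆ := by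
    let g₀ : L₀ →ₗ[ℝ] L₀ := LieAlgebra.ad ℝ L₀ x
    calc ⁅x, n⁆ = g₀ (∑ i, b.repr n i • b i) := by rw [b.sum_repr]; rfl
      _ = ∑ i, b.repr n i • ⁅x, (b i : L₀)⁆ := by
          rw [map_sum]; simp only [map_smul]; rfl
  simp only [key, hlim]
  refine tendsto_finset_sum _ fun i _ => Tendsto.smul ?_ (hT x (b i))
  have hc : Continuous (b.coord i) := (b.coord i).continuous_of_finiteDimensional
  have := (hc.tendsto n).comp hu
  simpa [Basis.coord_apply, Function.comp_def] using this

/-- Every element of a term of the lower central series of `L₀` is a limit of transported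
elements of the corresponding term of the lower central series of `L`. -/
lemma contraction_approx (T : ℕ → (L ≃ₗ[ℝ] L₀))
    (hT : ∀ x y : L₀, Tendsto (fun p => T p ⁅(T p).symm x, (T p).symm y⁆) atTop (nhds ⁅x, y⁆)) :
    ∀ (l : ℕ) (z : L₀), z ∈ lowerCentralSeries ℝ L₀ L₀ l →
      ∃ u : ℕ → L, (∀ p, u p ∈ lowerCentralSeries ℝ L L l) ∧
        Tendsto (fun p => T p (u p)) atTop (nhds z) := by
  intro l
  induction l with
  | zero =>
    intro z _
    exact ⟨fun p => (T p).symm z, fun p => LieSubmodule.mem_top _,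
      by simpa using tendsto_const_nhds⟩
  | succ l ih =>
    intro z hz
    rw [LieModule.lowerCentralSeries_succ, ← LieSubmodule.mem_toSubmodule,
      LieSubmodule.lieIdeal_oper_eq_linear_span'] at hz
    refine Submodule.span_induction ?_ ?_ ?_ ?_ hz
    · rintro _ ⟨x, -, m, hm, rfl⟩
      obtain ⟨u, hu, hconv⟩ := ih m hm
      refine ⟨fun p => ⁅(T p).symm x, u p⁆, fun p => ?_,
        contraction_bracket_tendsto T hT x hconv⟩
      rw [LieModule.lowerCentralSeries_succ]
      exact LieSubmodule.lie_mem_lie (LieSubmodule.mem_top _) (hu p)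
    · exact ⟨0, fun p => Submodule.zero_mem _, by simpa using tendsto_const_nhds⟩
    · rintro y y' - - ⟨u, hu, hcu⟩ ⟨v, hv, hcv⟩
      refine ⟨u + v, fun p => add_mem (hu p) (hv p), ?_⟩
      simpa only [Pi.add_apply, map_add] using hcu.add hcv
    · rintro c y - ⟨u, hu, hcu⟩
      refine ⟨fun p => c • u p, fun p => SMulMemClass.smul_mem c (hu p), ?_⟩
      simpa only [map_smul] using hcu.const_smul c

end Aux

open LieModule in
/-- Under a sequential contraction, the dimensions of the terms of the lower central series do
not increase. -/
theorem lowerCentralSeries_finrank_le_of_contraction {L L₀ : Type*} [LieRing L] [LieAlgebra ℝ L] [LieRing L₀] [LieAlgebra ℝ L₀]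
    [Module.Finite ℝ L] [Module.Finite ℝ L₀]
    [TopologicalSpace L₀] [IsTopologicalAddGroup L₀] [ContinuousSMul ℝ L₀] [T2Space L₀]
    (h : IsSequentialContraction L L₀) :
    ∀ l : ℕ,
      finrank ℝ (lowerCentralSeries ℝ L₀ L₀ l : Submodule ℝ L₀) ≤
        finrank ℝ (lowerCentralSeries ℝ L L l : Submodule ℝ L) := by
  classical
  obtain ⟨T, hT⟩ := h
  intro l
  set W : Submodule ℝ L₀ := (lowerCentralSeries ℝ L₀ L₀ l : Submodule ℝ L₀) with hW
  set d : ℕ := finrank ℝ W with hd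
  let b : Basis (Fin d) ℝ W := Module.finBasis ℝ W
  -- approximating sequences for the basis vectors
  have happrox : ∀ i : Fin d, ∃ u : ℕ → L, (∀ p, u p ∈ lowerCentralSeries ℝ L L l) ∧
      Tendsto (fun p => T p (u p)) atTop (nhds ((b i : L₀))) := fun i =>
    contraction_approx T hT l _ ((LieSubmodule.mem_toSubmodule _).mp (b i).2)
  choose u hu hconv using happrox
  -- a linear projection onto W, giving coordinates
  obtain ⟨W', hW'⟩ := Submodule.exists_isCompl W
  let π : L₀ →ₗ[ℝ] W := W.linearProjOfIsCompl W' hW'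
  let ℓ : Fin d → (L₀ →ₗ[ℝ] ℝ) := fun j => (b.coord j).comp π
  let A : ℕ → Matrix (Fin d) (Fin d) ℝ := fun p => Matrix.of fun i j => ℓ j (T p (u i p))
  have hA : Tendsto A atTop (nhds 1) := by
    apply tendsto_pi_nhds.mpr
    intro i
    apply tendsto_pi_nhds.mpr
    intro j
    have hc : Continuous (ℓ j) := (ℓ j).continuous_of_finiteDimensional
    have hlim : Tendsto (fun p => ℓ j (T p (u i p))) atTop (nhds (ℓ j (b i))) :=
      (hc.tendsto _).comp (hconv i)
    have hval : ℓ j ((b i : L₀)) = (1 : Matrix (Fin d) (Fin d) ℝ) i j := by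
      simp only [ℓ, LinearMap.comp_apply, π, Submodule.linearProjOfIsCompl, Submodule.projectionOnto_apply_left,
        Basis.coord_apply, Basis.repr_self_apply, Matrix.one_apply]
    rw [hval] at hlim
    exact hlim
  have hdet : Tendsto (fun p => (A p).det) atTop (nhds 1) := by
    have : Continuous fun M : Matrix (Fin d) (Fin d) ℝ => M.det := Continuous.matrix_det continuous_id
    simpa [Function.comp_def] using (this.tendsto 1).comp hA
  obtain ⟨p, hp⟩ := (hdet.eventually_ne one_ne_zero).exists
  -- the rows of `A p` are linearly independent
  have hrows : LinearIndependent ℝ (fun i => A p i) :=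
    Matrix.linearIndependent_rows_iff_isUnit.mpr
      ((Matrix.isUnit_iff_isUnit_det _).mpr (isUnit_iff_ne_zero.mpr hp))
  -- transport independence back to `L`
  let φ : L₀ →ₗ[ℝ] (Fin d → ℝ) := LinearMap.pi ℓ
  have hφ : LinearIndependent ℝ (fun i => φ (T p (u i p))) := hrows
  have hind₀ : LinearIndependent ℝ (fun i => T p (u i p)) := hφ.of_comp φ
  have hind₁ : LinearIndependent ℝ (fun i => u i p) := by
    have : LinearIndependent ℝ (fun i => (T p).toLinearMap (u i p)) := hind₀
    exact this.of_comp (T p).toLinearMap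
  let w : Fin d → (lowerCentralSeries ℝ L L l : Submodule ℝ L) := fun i => ⟨u i p, hu i p⟩
  have hw : LinearIndependent ℝ w := by
    have : LinearIndependent ℝ
        (fun i => (lowerCentralSeries ℝ L L l : Submodule ℝ L).subtype (w i)) := hind₁
    exact this.of_comp _
  simpa using hw.fintype_card_le_finrank
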